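/- For y_i > y_j, σ_i, σ_j > 0, the function R(r_i, r_j) = (y_i − y_j)² / (2(σ_i²/r_i + σ_j²/r_j)) on (0,∞)² is jointly concave in (r_i, r_j). -/

import Mathlib

/-- Cauchy–Schwarz style bound: for positive `s,t,x,y` and weights `α+β=1`,
`(s/x + t/y)⁻¹ ≤ α²x/s + β²y/t`. -/
lemma harm_key (s t x y α β : ℝ) (hs : 0 < s) (ht : 0 < t) (hx : 0 < x)
    (hy : 0 < y) (hab : α + β = 1) :
    (s / x + t / y)⁻¹ ≤ α ^ 2 * x / s + β ^ 2 * y / t := by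
  have hD : 0 < s / x + t / y := by positivity
  rw [inv_eq_one_div, div_le_iff₀ hD]
  have h1 := sq_nonneg (α * t * x - β * s * y)
  have h2 : 0 < s * t * x * y := by positivity
  field_simp
  have h3 : (α + β) ^ 2 = 1 := by rw [hab]; ring
  nlinarith [h1, h2, h3]

/-- The pairwise large-deviations rate
`R(rᵢ, rⱼ) = (yᵢ − yⱼ)²/(2(σᵢ²/rᵢ + σⱼ²/rⱼ))` is jointly concave on `(0,∞)²`. -/
theorem pairwise_rate_concave
    (yi yj σi σj : ℝ) (hy : yj < yi) (hσi : 0 < σi) (hσj : 0 < σj) :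
    ConcaveOn ℝ (Set.Ioi (0 : ℝ) ×ˢ Set.Ioi (0 : ℝ))
      (fun p : ℝ × ℝ => (yi - yj) ^ 2 / (2 * (σi ^ 2 / p.1 + σj ^ 2 / p.2))) := by
  set s := σi ^ 2 with hsdef
  set t := σj ^ 2 with htdef
  have hs : 0 < s := by positivity
  have ht : 0 < t := by positivity
  have hK : 0 < (yi - yj) ^ 2 := pow_pos (sub_pos.2 hy) 2
  set K := (yi - yj) ^ 2 with hKdef
  constructor
  · exact (convex_Ioi 0).prod (convex_Ioi 0)
  · rintro ⟨x1, y1⟩ ⟨hx1, hy1⟩ ⟨x2, y2⟩ ⟨hx2, hy2⟩ a b ha hb hab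
    simp only [Set.mem_Ioi] at hx1 hy1 hx2 hy2
    simp only [Prod.smul_mk, Prod.mk_add_mk, smul_eq_mul]
    set px := a * x1 + b * x2 with hpx
    set py := a * y1 + b * y2 with hpy
    have hpx0 : 0 < px := by
      rcases eq_or_lt_of_le ha with h | h
      · rw [hpx, ← h, zero_mul, zero_add]; have : b = 1 := by linarith
        rw [this, one_mul]; exact hx2
      · rcases eq_or_lt_of_le hb with h' | h'
        · rw [hpx, ← h', zero_mul, add_zero]; have : a = 1 := by linarith
          rw [this, one_mul]; exact hx1
        · positivity
    have hpy0 : 0 < py := by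
      rcases eq_or_lt_of_le ha with h | h
      · rw [hpy, ← h, zero_mul, zero_add]; have : b = 1 := by linarith
        rw [this, one_mul]; exact hy2
      · rcases eq_or_lt_of_le hb with h' | h'
        · rw [hpy, ← h', zero_mul, add_zero]; have : a = 1 := by linarith
          rw [this, one_mul]; exact hy1
        · positivity
    have hD : 0 < s / px + t / py := by positivity
    set α := (s / px) / (s / px + t / py) with hα
    set β := (t / py) / (s / px + t / py) with hβ
    have hαβ : α + β = 1 := by
      rw [hα, hβ, ← add_div, div_self hD.ne']
    have h1 := harm_key s t x1 y1 α β hs ht hx1 hy1 hαβ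
    have h2 := harm_key s t x2 y2 α β hs ht hx2 hy2 hαβ
    have hEq : α ^ 2 * px / s + β ^ 2 * py / t = (s / px + t / py)⁻¹ := by
      rw [hα, hβ]
      field_simp
    have hsum : a * (s / x1 + t / y1)⁻¹ + b * (s / x2 + t / y2)⁻¹
        ≤ (s / px + t / py)⁻¹ := by
      have ha1 := mul_le_mul_of_nonneg_left h1 ha
      have hb1 := mul_le_mul_of_nonneg_left h2 hb
      have : a * (α ^ 2 * x1 / s + β ^ 2 * y1 / t)
          + b * (α ^ 2 * x2 / s + β ^ 2 * y2 / t)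
          = α ^ 2 * px / s + β ^ 2 * py / t := by
        rw [hpx, hpy]; ring
      linarith [hEq ▸ this]
    have hrw : ∀ E : ℝ, K / (2 * E) = (K / 2) * E⁻¹ := fun E => by
      rw [← div_div, div_eq_mul_inv]
    simp only [hrw]
    have hK2 : (0:ℝ) ≤ K / 2 := by positivity
    calc a * (K / 2 * (s / x1 + t / y1)⁻¹) + b * (K / 2 * (s / x2 + t / y2)⁻¹)
        = (K / 2) * (a * (s / x1 + t / y1)⁻¹ + b * (s / x2 + t / y2)⁻¹) := by ring
      _ ≤ (K / 2) * (s / px + t / py)⁻¹ := mul_le_mul_of_nonneg_left hsum hK2
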